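/- arXiv:1301.4626 — 2 statements merged into one kernel-verified Lean document; each statement's English description precedes it below -/
import Mathlib

section
/- The pointwise product of two positive definite kernels on a set Ω is positive definite. -/
open ComplexConjugate
open scoped ComplexOrder

section AuxSchur
open Matrix

lemma quad_zero {M : ℕ} (B : Matrix (Fin M) (Fin M) ℂ)
    (h : ∀ c : Fin M → ℂ, ∑ l, ∑ k, conj (c l) * B l k * c k = 0) : B = 0 := by
  have diag : ∀ p : Fin M, B p p = 0 := by
    intro p
    have := h (Pi.single p 1)
    simpa [Pi.single_apply, apply_ite conj, ite_mul, mul_ite,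
      Finset.sum_ite_eq'] using this
  have key : ∀ (p q : Fin M) (a b : ℂ), p ≠ q →
      conj a * B p q * b + conj b * B q p * a = 0 := by
    intro p q a b hpq
    have H := h (fun j => if j = p then a else if j = q then b else 0)
    simp only [apply_ite conj, map_zero, ite_mul, mul_ite, mul_zero, zero_mul] at H
    rw [Finset.sum_eq_add_of_mem p q (Finset.mem_univ p) (Finset.mem_univ q) hpq
      (by intro c _ hc; simp [hc.1, hc.2])] at H
    rw [Finset.sum_eq_add_of_mem p q (Finset.mem_univ p) (Finset.mem_univ q) hpq
      (by intro c _ hc; simp [hc.1, hc.2]),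
      Finset.sum_eq_add_of_mem p q (Finset.mem_univ p) (Finset.mem_univ q) hpq
      (by intro c _ hc; simp [hc.1, hc.2])] at H
    simp only [if_pos rfl, if_neg hpq, if_neg hpq.symm, if_true, diag, mul_zero, zero_mul,
      add_zero, zero_add] at H
    linear_combination H
  ext p q
  rcases eq_or_ne p q with rfl | hpq
  · simp [diag]
  · have h1 := key p q 1 1 hpq
    have h2 := key p q 1 Complex.I hpq
    simp only [_root_.map_one, one_mul, mul_one, Complex.conj_I] at h1 h2
    -- h1 : B p q + B q p = 0, h2 : B p q * I + -I * B q p = 0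
    have : B p q = 0 := by
      linear_combination (-(Complex.I)/2) * Complex.I * h1 + (-(Complex.I)/2) * h2
        + (B p q) * Complex.I_sq
    simpa using this

lemma quad_eq {M : ℕ} (A : Matrix (Fin M) (Fin M) ℂ) (c : Fin M → ℂ) :
    dotProduct (star c) (A *ᵥ c) = ∑ l, ∑ k, conj (c l) * A l k * c k := by
  simp only [dotProduct, Matrix.mulVec, dotProduct, Pi.star_apply, Finset.mul_sum]
  exact Finset.sum_congr rfl fun l _ => Finset.sum_congr rfl fun k _ => by
    simp [RCLike.star_def]; ring

lemma posSemidef_of_quad {M : ℕ} (A : Matrix (Fin M) (Fin M) ℂ)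
    (h : ∀ c : Fin M → ℂ, 0 ≤ ∑ l, ∑ k, conj (c l) * A l k * c k) : A.PosSemidef := by
  have herm : A.IsHermitian := by
    have hz : ∀ c : Fin M → ℂ, ∑ l, ∑ k, conj (c l) * (A - Aᴴ) l k * c k = 0 := by
      intro c
      set S := ∑ l, ∑ k, conj (c l) * A l k * c k with hS
      have hr : conj S = S := by
        rw [Complex.conj_eq_iff_im]
        exact ((Complex.nonneg_iff.mp (h c)).2).symm
      have hc : conj S = ∑ l, ∑ k, conj (c l) * conj (A k l) * c k := by
        rw [hS]
        simp only [map_sum, _root_.map_mul, Complex.conj_conj]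
        rw [Finset.sum_comm]
        exact Finset.sum_congr rfl fun l _ => Finset.sum_congr rfl fun k _ => by ring
      calc ∑ l, ∑ k, conj (c l) * (A - Aᴴ) l k * c k
          = S - ∑ l, ∑ k, conj (c l) * conj (A k l) * c k := by
            simp only [Matrix.sub_apply, Matrix.conjTranspose_apply, RCLike.star_def,
              sub_mul, mul_sub, Finset.sum_sub_distrib, hS]
        _ = S - conj S := by rw [hc]
        _ = 0 := by rw [hr, sub_self]
    have h0 : A - Aᴴ = 0 := quad_zero _ hz
    exact (sub_eq_zero.mp h0).symm
  exact Matrix.PosSemidef.of_dotProduct_mulVec_nonneg herm (fun x => by rw [quad_eq]; exact h x)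

open scoped MatrixOrder in
lemma psd_eq_conjTranspose_mul_self {M : ℕ} {A : Matrix (Fin M) (Fin M) ℂ} (hA : A.PosSemidef) :
    ∃ B : Matrix (Fin M) (Fin M) ℂ, A = Bᴴ * B := by
  obtain ⟨B, hB⟩ := CStarAlgebra.nonneg_iff_eq_star_mul_self.mp hA.nonneg
  exact ⟨B, hB⟩


end AuxSchur

/-- A kernel is positive definite if all finite Gram sums are nonnegative. -/
def PosDefKernel {Ω : Type*} (K : Ω → Ω → ℂ) : Prop :=
  ∀ (M : ℕ) (w : Fin M → Ω) (c : Fin M → ℂ),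
    0 ≤ ∑ l, ∑ k, conj (c l) * K (w l) (w k) * c k

/-- Schur product theorem, kernel form. -/
theorem stmt_4 {Ω : Type*} (K₁ K₂ : Ω → Ω → ℂ)
    (h₁ : PosDefKernel K₁) (h₂ : PosDefKernel K₂) :
    PosDefKernel (fun z w => K₁ z w * K₂ z w) := by
  intro M w c
  have hA₁ : (Matrix.of fun l k => K₁ (w l) (w k)).PosSemidef :=
    posSemidef_of_quad _ (fun d => h₁ M w d)
  have hA₂ : (Matrix.of fun l k => K₂ (w l) (w k)).PosSemidef :=
    posSemidef_of_quad _ (fun d => h₂ M w d)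
  obtain ⟨B₁, hB₁⟩ := psd_eq_conjTranspose_mul_self hA₁
  obtain ⟨B₂, hB₂⟩ := psd_eq_conjTranspose_mul_self hA₂
  have e₁ : ∀ l k, K₁ (w l) (w k) = ∑ i, conj (B₁ i l) * B₁ i k := by
    intro l k
    have := congrFun (congrFun hB₁ l) k
    simpa [Matrix.mul_apply, Matrix.conjTranspose_apply, RCLike.star_def] using this
  have e₂ : ∀ l k, K₂ (w l) (w k) = ∑ j, conj (B₂ j l) * B₂ j k := by
    intro l k
    have := congrFun (congrFun hB₂ l) k
    simpa [Matrix.mul_apply, Matrix.conjTranspose_apply, RCLike.star_def] using this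
  set S : Fin M → Fin M → ℂ := fun i j => ∑ k, c k * (B₁ i k * B₂ j k) with hSdef
  have key : ∑ l, ∑ k, conj (c l) * (K₁ (w l) (w k) * K₂ (w l) (w k)) * c k
      = ∑ i, ∑ j, conj (S i j) * S i j := by
    calc ∑ l, ∑ k, conj (c l) * (K₁ (w l) (w k) * K₂ (w l) (w k)) * c k
        = ∑ l, ∑ k, ∑ i, ∑ j,
            (conj (c l) * conj (B₁ i l) * conj (B₂ j l)) * (c k * (B₁ i k * B₂ j k)) := by
          refine Finset.sum_congr rfl fun l _ => Finset.sum_congr rfl fun k _ => ?_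
          rw [e₁, e₂, Finset.sum_mul_sum]
          rw [Finset.mul_sum, Finset.sum_mul]
          refine Finset.sum_congr rfl fun i _ => ?_
          rw [Finset.mul_sum, Finset.sum_mul]
          exact Finset.sum_congr rfl fun j _ => by ring
      _ = ∑ i, ∑ j, ∑ l, ∑ k,
            (conj (c l) * conj (B₁ i l) * conj (B₂ j l)) * (c k * (B₁ i k * B₂ j k)) := by
          rw [show (∑ l, ∑ k, ∑ i, ∑ j : Fin M,
              (conj (c l) * conj (B₁ i l) * conj (B₂ j l)) * (c k * (B₁ i k * B₂ j k)))
              = ∑ l, ∑ i, ∑ k, ∑ j : Fin M,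
              (conj (c l) * conj (B₁ i l) * conj (B₂ j l)) * (c k * (B₁ i k * B₂ j k))
            from Finset.sum_congr rfl fun l _ => Finset.sum_comm,
            Finset.sum_comm]
          refine Finset.sum_congr rfl fun i _ => ?_
          rw [show (∑ l, ∑ k, ∑ j : Fin M,
              (conj (c l) * conj (B₁ i l) * conj (B₂ j l)) * (c k * (B₁ i k * B₂ j k)))
              = ∑ l, ∑ j, ∑ k : Fin M,
              (conj (c l) * conj (B₁ i l) * conj (B₂ j l)) * (c k * (B₁ i k * B₂ j k))
            from Finset.sum_congr rfl fun l _ => Finset.sum_comm,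
            Finset.sum_comm]
      _ = ∑ i, ∑ j, conj (S i j) * S i j := by
          refine Finset.sum_congr rfl fun i _ => Finset.sum_congr rfl fun j _ => ?_
          rw [hSdef]
          simp only [map_sum, _root_.map_mul]
          rw [Finset.sum_mul_sum]
          exact Finset.sum_congr rfl fun l _ => Finset.sum_congr rfl fun k _ => by ring
  rw [key]
  refine Finset.sum_nonneg fun i _ => Finset.sum_nonneg fun j _ => ?_
  simpa [RCLike.star_def] using star_mul_self_nonneg (S i j)
end

section
/- Let Ω ⊆ ℂ with R(z) = z⁴ − 2z² satisfying ∑_n |R_n(z)|² < ∞ for z ∈ Ω, and K(z,w) = ∏_{n≥0}(1 + R_n(z)·conj(R_n(w))). Then K converges on Ω × Ω, is positive definite, and K(z,w) = (1 + z·conj(w))·K(R(z), R(w)). -/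
open ComplexConjugate
open scoped ComplexOrder

/-- If `∑ ‖f n‖ < ∞` then `∏ (1 + f n)` converges. -/
lemma aux_multipliable_one_add (f : ℕ → ℂ) (hf : Summable fun n => ‖f n‖) :
    Multipliable fun n => 1 + f n := by
  by_cases h : ∃ n, 1 + f n = 0
  · obtain ⟨n, hn⟩ := h
    refine ⟨0, ?_⟩
    have hev : ∀ᶠ s : Finset ℕ in Filter.atTop, ∏ i ∈ s, (1 + f i) = 0 := by
      filter_upwards [Filter.eventually_ge_atTop {n}] with s hs
      exact Finset.prod_eq_zero (hs (Finset.mem_singleton_self n)) hn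
    exact Filter.Tendsto.congr' (hev.mono fun s hs => hs.symm) tendsto_const_nhds
  · push_neg at h
    have hlog : Summable fun n => Complex.log (1 + f n) := by
      have hsmall : ∀ᶠ n in Filter.cofinite, ‖f n‖ ≤ 1 / 2 := by
        have ht := hf.tendsto_cofinite_zero
        filter_upwards [ht.eventually_lt_const (by norm_num : (0 : ℝ) < 1 / 2)] with n hn
        exact hn.le
      refine Summable.of_norm_bounded_eventually (g := fun n => (3 / 2) * ‖f n‖)
        (hf.mul_left _) ?_
      filter_upwards [hsmall] with n hn
      exact Complex.norm_log_one_add_half_le_self hn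
    exact Complex.multipliable_of_summable_log hlog

lemma aux_summable_mul (R : ℂ → ℂ) (z w : ℂ)
    (hz : Summable fun n : ℕ => ‖R^[n] z‖ ^ 2)
    (hw : Summable fun n : ℕ => ‖R^[n] w‖ ^ 2) :
    Summable fun n : ℕ => ‖R^[n] z * conj (R^[n] w)‖ := by
  refine Summable.of_nonneg_of_le (fun n => norm_nonneg _) (fun n => ?_) (hz.add hw)
  have : ‖R^[n] z * conj (R^[n] w)‖ = ‖R^[n] z‖ * ‖R^[n] w‖ := by
    rw [norm_mul, RingHomIsometric.norm_map]
  rw [this]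
  nlinarith [norm_nonneg (R^[n] z), norm_nonneg (R^[n] w),
    sq_nonneg (‖R^[n] z‖ - ‖R^[n] w‖)]

set_option maxHeartbeats 1000000 in
theorem stmt_10 (R : ℂ → ℂ) (hR : ∀ z, R z = z ^ 4 - 2 * z ^ 2)
    (Ω : Set ℂ) (hΩ : ∀ z ∈ Ω, Summable fun n : ℕ => ‖R^[n] z‖ ^ 2)
    (hRΩ : Set.MapsTo R Ω Ω)
    (K : ℂ → ℂ → ℂ)
    (hK : ∀ z w : ℂ, K z w = ∏' n : ℕ, (1 + R^[n] z * conj (R^[n] w))) :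
    (∀ z ∈ Ω, ∀ w ∈ Ω,
      (Multipliable fun n : ℕ => 1 + R^[n] z * conj (R^[n] w)) ∧
      K z w = (1 + z * conj w) * K (R z) (R w)) ∧
    PosDefKernel (fun z w : Ω => K z w) := by
  have mult : ∀ z ∈ Ω, ∀ w ∈ Ω,
      Multipliable fun n : ℕ => 1 + R^[n] z * conj (R^[n] w) := fun z hz w hw =>
    aux_multipliable_one_add _ (aux_summable_mul R z w (hΩ z hz) (hΩ w hw))
  constructor
  · intro z hz w hw
    refine ⟨mult z hz w hw, ?_⟩
    have hmult' : Multipliable fun n : ℕ =>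
        1 + R^[n + 1] z * conj (R^[n + 1] w) := by
      refine (mult (R z) (hRΩ hz) (R w) (hRΩ hw)).congr fun n => ?_
      simp [Function.iterate_succ_apply]
    have := tprod_eq_zero_mul' (f := fun m : ℕ => 1 + R^[m] z * conj (R^[m] w)) hmult'
    rw [hK z w, this, hK (R z) (R w)]
    congr 1
  · intro M w c
    set g : ℕ → Fin M → Fin M → ℂ :=
      fun n l k => 1 + R^[n] (w l : ℂ) * conj (R^[n] (w k : ℂ)) with hg
    set P : ℕ → Fin M → Fin M → ℂ :=
      fun N l k => ∏ n ∈ Finset.range N, g n l k with hP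
    -- each finite partial-product Gram sum is nonnegative
    have hpos : ∀ N : ℕ, ∀ d : Fin M → ℂ,
        0 ≤ ∑ l, ∑ k, conj (d l) * P N l k * d k := by
      intro N
      induction N with
      | zero =>
        intro d
        have : ∑ l, ∑ k, conj (d l) * P 0 l k * d k
            = star (∑ l, d l) * (∑ l, d l) := by
          simp only [hP, Finset.range_zero, Finset.prod_empty, mul_one]
          rw [star_sum, Finset.sum_mul]
          refine Finset.sum_congr rfl fun l _ => ?_
          rw [Finset.mul_sum]
          refine Finset.sum_congr rfl fun k _ => ?_
          simp [Complex.star_def]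
        rw [this]
        exact star_mul_self_nonneg _
      | succ N ih =>
        intro d
        set e : Fin M → ℂ := fun l => conj (R^[N] (w l : ℂ)) * d l with he
        have hsplit : ∀ l k, conj (d l) * P (N + 1) l k * d k
            = conj (d l) * P N l k * d k + conj (e l) * P N l k * e k := by
          intro l k
          simp only [hP, Finset.prod_range_succ, hg, he, map_mul,
            Complex.conj_conj]
          ring
        calc (0 : ℂ) ≤ (∑ l, ∑ k, conj (d l) * P N l k * d k)
              + ∑ l, ∑ k, conj (e l) * P N l k * e k := by
              exact add_nonneg (ih d) (ih e)
          _ = ∑ l, ∑ k, conj (d l) * P (N + 1) l k * d k := by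
              rw [← Finset.sum_add_distrib]
              refine Finset.sum_congr rfl fun l _ => ?_
              rw [← Finset.sum_add_distrib]
              exact Finset.sum_congr rfl fun k _ => (hsplit l k).symm
    -- the Gram sum of K is the limit of the partial sums
    have hlim : Filter.Tendsto (fun N => ∑ l, ∑ k, conj (c l) * P N l k * c k)
        Filter.atTop (nhds (∑ l, ∑ k, conj (c l) * K (w l : ℂ) (w k : ℂ) * c k)) := by
      refine tendsto_finset_sum _ fun l _ => ?_
      refine tendsto_finset_sum _ fun k _ => ?_
      have hPlim : Filter.Tendsto (fun N => P N l k) Filter.atTop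
          (nhds (K (w l : ℂ) (w k : ℂ))) := by
        rw [hK]
        exact (mult (w l : ℂ) (w l).2 (w k : ℂ) (w k).2).hasProd.tendsto_prod_nat
      exact (hPlim.const_mul _).mul_const _
    set L := ∑ l, ∑ k, conj (c l) * K (w l : ℂ) (w k : ℂ) * c k with hL
    rw [Complex.le_def]
    constructor
    · refine ge_of_tendsto' ((Complex.continuous_re.tendsto L).comp hlim) fun N => ?_
      have := (Complex.le_def.mp (hpos N c)).1
      simpa using this
    · have h1 : Filter.Tendsto (fun N => (∑ l, ∑ k, conj (c l) * P N l k * c k).im)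
          Filter.atTop (nhds L.im) := (Complex.continuous_im.tendsto L).comp hlim
      have h2 : ∀ N, (∑ l, ∑ k, conj (c l) * P N l k * c k).im = 0 := fun N => by
        have := (Complex.le_def.mp (hpos N c)).2
        simp_all
      have h3 : Filter.Tendsto (fun N => (∑ l, ∑ k, conj (c l) * P N l k * c k).im)
          Filter.atTop (nhds 0) := by
        simpa [h2] using (tendsto_const_nhds : Filter.Tendsto (fun _ : ℕ => (0:ℝ))
          Filter.atTop (nhds 0))
      simpa using (tendsto_nhds_unique h1 h3).symm
end
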